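/- An evolution algebra whose structure matrix A is strictly upper triangular (a_{ij} = 0 for j ≤ i) is right nilpotent: there exists s with E^{<s>} = 0, where E^{<1>} = E and E^{<k+1>} = E^{<k>}·E. -/

import Mathlib

variable (K : Type*) [Field K] (E : Type*) [NonUnitalNonAssocRing E]
  [Module K E] [SMulCommClass K E E] [IsScalarTower K E E]

/-- The right powers `E^{<k>}` of the algebra: `rightPow K E 0 = E^{<1>} = E`,
`rightPow K E k = E^{<k+1>} = E^{<k>}·E` (the span of products). -/
def rightPow : ℕ → Submodule K E
  | 0 => ⊤
  | k + 1 => Submodule.span K {z : E | ∃ x ∈ rightPow k, ∃ y : E, z = x * y}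

/-- An evolution algebra with strictly upper triangular structure matrix is
right nilpotent: some right power `E^{<s>}` vanishes. -/
theorem stmt7 {K : Type*} [Field K] {E : Type*} [NonUnitalNonAssocRing E]
    [Module K E] [SMulCommClass K E E] [IsScalarTower K E E]
    {n : ℕ} (b : Module.Basis (Fin n) K E) (a : Matrix (Fin n) (Fin n) K)
    (hmul0 : ∀ i j, i ≠ j → b i * b j = 0)
    (hsq : ∀ i, b i * b i = ∑ k, a i k • b k)
    (htri : ∀ i j : Fin n, j ≤ i → a i j = 0) :
    ∃ s : ℕ, rightPow K E s = ⊥ := by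
  classical
  set S : ℕ → Submodule K E := fun m => Submodule.span K (b '' {j | m ≤ (j : ℕ)}) with hS
  have hmul : ∀ m, ∀ x ∈ S m, ∀ y : E, x * y ∈ S (m + 1) := by
    intro m x hx y
    induction hx using Submodule.span_induction with
    | mem z hz =>
      obtain ⟨i, hi, rfl⟩ := hz
      have key : b i * y = b.repr y i • ∑ k, a i k • b k := by
        conv_lhs => rw [← b.sum_repr y]
        rw [Finset.mul_sum, Finset.sum_eq_single i]
        · rw [mul_smul_comm, hsq]
        · intro j _ hj
          rw [mul_smul_comm, hmul0 i j (Ne.symm hj), smul_zero]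
        · intro h; exact absurd (Finset.mem_univ i) h
      rw [key]
      refine Submodule.smul_mem _ _ (Submodule.sum_mem _ ?_)
      intro k _
      by_cases hk : a i k = 0
      · rw [hk, zero_smul]; exact Submodule.zero_mem _
      · refine Submodule.smul_mem _ _ (Submodule.subset_span ⟨k, ?_, rfl⟩)
        have h1 : ¬ (k ≤ i) := fun h => hk (htri i k h)
        have h2 : (i : ℕ) < (k : ℕ) := lt_of_not_ge h1
        exact Nat.succ_le_of_lt (lt_of_le_of_lt hi h2)
    | zero => rw [zero_mul]; exact Submodule.zero_mem _
    | add u v _ _ hu hv => rw [add_mul]; exact Submodule.add_mem _ hu hv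
    | smul c u _ hu => rw [smul_mul_assoc]; exact Submodule.smul_mem _ _ hu
  have hpow : ∀ k, rightPow K E k ≤ S k := by
    intro k
    induction k with
    | zero =>
      have : S 0 = ⊤ := by
        have h1 : (b '' {j : Fin n | 0 ≤ (j : ℕ)}) = Set.range b := by
          ext z; simp
        rw [hS]; simp only [h1]; exact b.span_eq
      rw [rightPow, this]
    | succ k ih =>
      rw [rightPow]
      apply Submodule.span_le.2
      rintro z ⟨x, hx, y, rfl⟩
      exact hmul k x (ih hx) y
  refine ⟨n, le_bot_iff.1 ((hpow n).trans ?_)⟩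
  have hempty : (b '' {j : Fin n | n ≤ (j : ℕ)}) = ∅ := by
    ext z
    simp only [Set.mem_image, Set.mem_setOf_eq, Set.mem_empty_iff_false, iff_false]
    rintro ⟨j, hj, rfl⟩
    exact absurd hj (not_le.2 j.isLt)
  show Submodule.span K (b '' {j : Fin n | n ≤ (j : ℕ)}) ≤ ⊥
  rw [hempty, Submodule.span_empty]
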